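/- A group homomorphism Φ : G → H between Lie groups that is smooth intertwines the evolution operators: Evol_H(Φ' ∘ X) = Φ ∘ Evol_G(X) for every smooth curve X : ℝ → 𝔤, where Φ' : 𝔤 → 𝔥 is the derivative of Φ at the identity. -/

import Mathlib

open scoped Manifold

/-- A smooth group homomorphism `Φ : G → H` between Lie groups intertwines the
evolution operators: if `c = Evol_G (X)` (i.e. `c 0 = e` and the right logarithmic derivative of
`c` is `X`), then `Φ ∘ c` satisfies `(Φ ∘ c) 0 = e` and its right logarithmic derivative is
`Φ' ∘ X`, where `Φ' = T_e Φ` is the derivative of `Φ` at the identity; hence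
`Evol_H (Φ' ∘ X) = Φ ∘ Evol_G (X)`. -/
theorem homomorphism_intertwines_evolution
    {E : Type*} [NormedAddCommGroup E] [NormedSpace ℝ E]
    {G : Type*} [TopologicalSpace G] [ChartedSpace E G] [Group G] [LieGroup 𝓘(ℝ, E) (⊤ : ℕ∞) G]
    {F : Type*} [NormedAddCommGroup F] [NormedSpace ℝ F]
    {H : Type*} [TopologicalSpace H] [ChartedSpace F H] [Group H] [LieGroup 𝓘(ℝ, F) (⊤ : ℕ∞) H]
    (Φ : G → H)
    (hΦ_smooth : ContMDiff 𝓘(ℝ, E) 𝓘(ℝ, F) (⊤ : ℕ∞) Φ)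
    (hΦ_hom : ∀ a b : G, Φ (a * b) = Φ a * Φ b)
    (X : ℝ → E) (c : ℝ → G)
    (hc_smooth : ContMDiff 𝓘(ℝ) 𝓘(ℝ, E) (⊤ : ℕ∞) c)
    (hc0 : c 0 = 1)
    -- `c` has right logarithmic derivative `X`, i.e. `c = Evol_G (X)`:
    (hc : ∀ t : ℝ, mfderiv 𝓘(ℝ) 𝓘(ℝ, E) c t (1 : ℝ) =
      mfderiv 𝓘(ℝ, E) 𝓘(ℝ, E) (fun g : G => g * c t) 1 (X t)) :
    (Φ ∘ c) 0 = 1 ∧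
    ∀ t : ℝ, mfderiv 𝓘(ℝ) 𝓘(ℝ, F) (Φ ∘ c) t (1 : ℝ) =
      mfderiv 𝓘(ℝ, F) 𝓘(ℝ, F) (fun h : H => h * Φ (c t)) 1
        (mfderiv 𝓘(ℝ, E) 𝓘(ℝ, F) Φ 1 (X t)) := by
  have hΦ1 : Φ 1 = 1 := by
    have h := hΦ_hom 1 1
    rw [one_mul] at h
    exact (mul_left_cancel (h.symm.trans (mul_one _).symm))
  refine ⟨by simp [Function.comp, hc0, hΦ1], fun t => ?_⟩
  have hΦd : ∀ g : G, MDifferentiableAt 𝓘(ℝ, E) 𝓘(ℝ, F) Φ g :=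
    fun g => hΦ_smooth.mdifferentiableAt (by simp)
  have hcd : MDifferentiableAt 𝓘(ℝ) 𝓘(ℝ, E) c t := hc_smooth.mdifferentiableAt (by simp)
  have hcomp : mfderiv 𝓘(ℝ) 𝓘(ℝ, F) (Φ ∘ c) t =
      (mfderiv 𝓘(ℝ, E) 𝓘(ℝ, F) Φ (c t)).comp (mfderiv 𝓘(ℝ) 𝓘(ℝ, E) c t) :=
    mfderiv_comp t (hΦd (c t)) hcd
  have hmulG : MDifferentiableAt 𝓘(ℝ, E) 𝓘(ℝ, E) (fun g : G => g * c t) 1 :=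
    (contMDiff_mul_right (G := G) (n := ((⊤ : ℕ∞) : WithTop ℕ∞)) (a := c t)).mdifferentiableAt (by simp)
  have hmulH : MDifferentiableAt 𝓘(ℝ, F) 𝓘(ℝ, F) (fun h : H => h * Φ (c t)) 1 :=
    (contMDiff_mul_right (G := H) (n := ((⊤ : ℕ∞) : WithTop ℕ∞)) (a := Φ (c t))).mdifferentiableAt (by simp)
  have hfun : Φ ∘ (fun g : G => g * c t) = (fun h : H => h * Φ (c t)) ∘ Φ := by
    funext g; simp [Function.comp, hΦ_hom]
  have key : (mfderiv 𝓘(ℝ, E) 𝓘(ℝ, F) Φ (c t)).comp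
        (mfderiv 𝓘(ℝ, E) 𝓘(ℝ, E) (fun g : G => g * c t) 1) =
      (mfderiv 𝓘(ℝ, F) 𝓘(ℝ, F) (fun h : H => h * Φ (c t)) 1).comp
        (mfderiv 𝓘(ℝ, E) 𝓘(ℝ, F) Φ 1) := by
    have h1 : mfderiv 𝓘(ℝ, E) 𝓘(ℝ, F) (Φ ∘ fun g : G => g * c t) 1 =
        (mfderiv 𝓘(ℝ, E) 𝓘(ℝ, F) Φ ((1 : G) * c t)).comp
          (mfderiv 𝓘(ℝ, E) 𝓘(ℝ, E) (fun g : G => g * c t) 1) :=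
      mfderiv_comp 1 (hΦd _) hmulG
    have hmulH' : MDifferentiableAt 𝓘(ℝ, F) 𝓘(ℝ, F) (fun h : H => h * Φ (c t)) (Φ 1) := by
      rw [hΦ1]; exact hmulH
    have h2 : mfderiv 𝓘(ℝ, E) 𝓘(ℝ, F) ((fun h : H => h * Φ (c t)) ∘ Φ) 1 =
        (mfderiv 𝓘(ℝ, F) 𝓘(ℝ, F) (fun h : H => h * Φ (c t)) (Φ 1)).comp
          (mfderiv 𝓘(ℝ, E) 𝓘(ℝ, F) Φ 1) := mfderiv_comp (1 : G) hmulH' (hΦd 1)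
    rw [one_mul] at h1
    rw [hΦ1] at h2
    rw [← h1, ← h2, hfun]
  calc mfderiv 𝓘(ℝ) 𝓘(ℝ, F) (Φ ∘ c) t (1 : ℝ)
      = mfderiv 𝓘(ℝ, E) 𝓘(ℝ, F) Φ (c t) (mfderiv 𝓘(ℝ) 𝓘(ℝ, E) c t (1 : ℝ)) := by
        rw [hcomp]; rfl
    _ = mfderiv 𝓘(ℝ, E) 𝓘(ℝ, F) Φ (c t)
          (mfderiv 𝓘(ℝ, E) 𝓘(ℝ, E) (fun g : G => g * c t) 1 (X t)) := by rw [hc t]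
    _ = ((mfderiv 𝓘(ℝ, E) 𝓘(ℝ, F) Φ (c t)).comp
          (mfderiv 𝓘(ℝ, E) 𝓘(ℝ, E) (fun g : G => g * c t) 1)) (X t) := rfl
    _ = _ := by rw [key]; rfl
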